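/- For every QSL(𝔄) formula f, the cardinality of the evaluation set Eval(f) is at most 2^(π(f)+1), where π(f) is the probabilistic size of f. -/

import Mathlib

namespace QSLPaper

open scoped Classical

noncomputable section

/-- Variables: a countably infinite set. -/
abbrev Var : Type := ℕ
/-- Values. -/
abbrev Val : Type := ℤ
/-- Locations: positive integers. -/
abbrev Loc : Type := ℕ+
/-- Stacks. -/
abbrev Stack : Type := Var → Val
/-- Heaps: finite partial functions from locations to `k`-tuples of values. -/
abbrev Heap (k : ℕ) : Type := Finmap (fun _ : Loc => Fin k → Val)
/-- Program states: stack-heap pairs. -/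
abbrev HState (k : ℕ) : Type := Stack × Heap k

/-- Syntax of separation logic `SL(𝔄)`; atoms are predicates, i.e. sets of states. -/
inductive SL (k : ℕ) : Type where
  | tt : SL k
  | atom (p : Set (HState k)) : SL k
  | not (φ : SL k) : SL k
  | and (φ ψ : SL k) : SL k
  | or (φ ψ : SL k) : SL k
  | ex (x : Var) (φ : SL k) : SL k
  | all (x : Var) (φ : SL k) : SL k
  | sep (φ ψ : SL k) : SL k
  | wand (φ ψ : SL k) : SL k

/-- Standard separation-logic satisfaction relation `(s,h) ⊨ φ`. -/
def SL.sat {k : ℕ} : SL k → HState k → Prop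
  | .tt, _ => True
  | .atom p, σ => σ ∈ p
  | .not φ, σ => ¬ φ.sat σ
  | .and φ ψ, σ => φ.sat σ ∧ ψ.sat σ
  | .or φ ψ, σ => φ.sat σ ∨ ψ.sat σ
  | .ex x φ, σ => ∃ v : Val, φ.sat (Function.update σ.1 x v, σ.2)
  | .all x φ, σ => ∀ v : Val, φ.sat (Function.update σ.1 x v, σ.2)
  | .sep φ ψ, σ => ∃ h₁ h₂ : Heap k, h₁.Disjoint h₂ ∧ σ.2 = h₁ ∪ h₂ ∧
      φ.sat (σ.1, h₁) ∧ ψ.sat (σ.1, h₂)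
  | .wand φ ψ, σ => ∀ h' : Heap k, σ.2.Disjoint h' → φ.sat (σ.1, h') →
      ψ.sat (σ.1, σ.2 ∪ h')

/-- A formula is pure if its satisfaction does not depend on the heap. -/
def SL.Pure {k : ℕ} (B : SL k) : Prop :=
  ∀ (s : Stack) (h h' : Heap k), B.sat (s, h) ↔ B.sat (s, h')

/-- All atoms of the formula belong to the set `𝔄` of atomic predicates. -/
def SL.atomsIn {k : ℕ} (𝔄 : Set (Set (HState k))) : SL k → Prop
  | .tt => True
  | .atom p => p ∈ 𝔄
  | .not φ => φ.atomsIn 𝔄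
  | .and φ ψ => φ.atomsIn 𝔄 ∧ ψ.atomsIn 𝔄
  | .or φ ψ => φ.atomsIn 𝔄 ∧ ψ.atomsIn 𝔄
  | .ex _ φ => φ.atomsIn 𝔄
  | .all _ φ => φ.atomsIn 𝔄
  | .sep φ ψ => φ.atomsIn 𝔄 ∧ ψ.atomsIn 𝔄
  | .wand φ ψ => φ.atomsIn 𝔄 ∧ ψ.atomsIn 𝔄

/-- Syntax of quantitative separation logic `QSL(𝔄)`:
`f ::= [φ] | [B]·f + [¬B]·f | q·f + (1−q)·f | f·f | 1−f | max(f,f) | min(f,f) |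
       Sup x: f | Inf x: f | f ⋆ f | [φ] ─⋆ f`. -/
inductive QSL (k : ℕ) : Type where
  | iver (φ : SL k) : QSL k
  | ite (B : SL k) (g u : QSL k) : QSL k
  | pch (q : ℚ) (g u : QSL k) : QSL k
  | mul (g u : QSL k) : QSL k
  | onem (g : QSL k) : QSL k
  | qmax (g u : QSL k) : QSL k
  | qmin (g u : QSL k) : QSL k
  | sup (x : Var) (g : QSL k) : QSL k
  | inf (x : Var) (g : QSL k) : QSL k
  | sep (g u : QSL k) : QSL k
  | wand (φ : SL k) (g : QSL k) : QSL k

/-- Well-formedness: guards of conditionals are pure, and all probabilities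
lie in `[0,1]`.  A term `f : QSL k` with `f.WF` (and atoms in `𝔄`)
is a `QSL(𝔄)` formula as generated by the grammar. -/
def QSL.WF {k : ℕ} : QSL k → Prop
  | .iver _ => True
  | .ite B g u => B.Pure ∧ g.WF ∧ u.WF
  | .pch q g u => 0 ≤ q ∧ q ≤ 1 ∧ g.WF ∧ u.WF
  | .mul g u => g.WF ∧ u.WF
  | .onem g => g.WF
  | .qmax g u => g.WF ∧ u.WF
  | .qmin g u => g.WF ∧ u.WF
  | .sup _ g => g.WF
  | .inf _ g => g.WF
  | .sep g u => g.WF ∧ u.WF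
  | .wand _ g => g.WF

/-- All atoms of a `QSL` formula belong to `𝔄`. -/
def QSL.atomsIn {k : ℕ} (𝔄 : Set (Set (HState k))) : QSL k → Prop
  | .iver φ => φ.atomsIn 𝔄
  | .ite B g u => B.atomsIn 𝔄 ∧ g.atomsIn 𝔄 ∧ u.atomsIn 𝔄
  | .pch _ g u => g.atomsIn 𝔄 ∧ u.atomsIn 𝔄
  | .mul g u => g.atomsIn 𝔄 ∧ u.atomsIn 𝔄
  | .onem g => g.atomsIn 𝔄
  | .qmax g u => g.atomsIn 𝔄 ∧ u.atomsIn 𝔄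
  | .qmin g u => g.atomsIn 𝔄 ∧ u.atomsIn 𝔄
  | .sup _ g => g.atomsIn 𝔄
  | .inf _ g => g.atomsIn 𝔄
  | .sep g u => g.atomsIn 𝔄 ∧ u.atomsIn 𝔄
  | .wand φ g => φ.atomsIn 𝔄 ∧ g.atomsIn 𝔄

/-- The semantics `⟦f⟧ : States → ℝ` of quantitative separation logic. -/
noncomputable def QSL.eval {k : ℕ} : QSL k → HState k → ℝ
  | .iver φ, σ => if φ.sat σ then 1 else 0
  | .ite B g u, σ =>
      (if B.sat σ then (1 : ℝ) else 0) * g.eval σ +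
      (if (SL.not B).sat σ then (1 : ℝ) else 0) * u.eval σ
  | .pch q g u, σ => (q : ℝ) * g.eval σ + (1 - (q : ℝ)) * u.eval σ
  | .mul g u, σ => g.eval σ * u.eval σ
  | .onem g, σ => 1 - g.eval σ
  | .qmax g u, σ => max (g.eval σ) (u.eval σ)
  | .qmin g u, σ => min (g.eval σ) (u.eval σ)
  | .sup x g, σ => sSup { r : ℝ | ∃ v : Val, r = g.eval (Function.update σ.1 x v, σ.2) }
  | .inf x g, σ => sInf { r : ℝ | ∃ v : Val, r = g.eval (Function.update σ.1 x v, σ.2) }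
  | .sep g u, σ => sSup { r : ℝ | ∃ h₁ h₂ : Heap k, h₁.Disjoint h₂ ∧ σ.2 = h₁ ∪ h₂ ∧
      r = g.eval (σ.1, h₁) * u.eval (σ.1, h₂) }
  | .wand φ g, σ =>
      if { r : ℝ | ∃ h' : Heap k, σ.2.Disjoint h' ∧ φ.sat (σ.1, h') ∧
            r = g.eval (σ.1, σ.2 ∪ h') } = (∅ : Set ℝ) then 1
      else sInf { r : ℝ | ∃ h' : Heap k, σ.2.Disjoint h' ∧ φ.sat (σ.1, h') ∧
            r = g.eval (σ.1, σ.2 ∪ h') }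

end

end QSLPaper

namespace QSLPaper

/-- The evaluation set `Eval(f) ⊆ [0,1]`, defined inductively on the syntax. -/
def QSL.evalSet {k : ℕ} : QSL k → Set ℝ
  | .iver _ => {0, 1}
  | .ite _ g u => g.evalSet ∪ u.evalSet
  | .pch q g u =>
      { r : ℝ | ∃ β ∈ g.evalSet, ∃ γ ∈ u.evalSet, r = (q : ℝ) * β + (1 - (q : ℝ)) * γ }
  | .mul g u => { r : ℝ | ∃ β ∈ g.evalSet, ∃ γ ∈ u.evalSet, r = β * γ }
  | .onem g => { r : ℝ | ∃ β ∈ g.evalSet, r = 1 - β }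
  | .qmax g u => g.evalSet ∪ u.evalSet
  | .qmin g u => g.evalSet ∪ u.evalSet
  | .sup _ g => g.evalSet
  | .inf _ g => g.evalSet
  | .sep g u => { r : ℝ | ∃ β ∈ g.evalSet, ∃ γ ∈ u.evalSet, r = β * γ }
  | .wand _ g => g.evalSet

end QSLPaper

namespace QSLPaper

/-- Size of an `SL` formula (atoms have fixed atomic size 1). -/
def SL.size {k : ℕ} : SL k → ℕ
  | .tt => 1
  | .atom _ => 1
  | .not φ => 1 + φ.size
  | .and φ ψ => 1 + φ.size + ψ.size
  | .or φ ψ => 1 + φ.size + ψ.size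
  | .ex _ φ => 1 + φ.size
  | .all _ φ => 1 + φ.size
  | .sep φ ψ => 1 + φ.size + ψ.size
  | .wand φ ψ => 1 + φ.size + ψ.size

/-- Size `|f|` of a `QSL` formula. -/
def QSL.size {k : ℕ} : QSL k → ℕ
  | .iver φ => φ.size
  | .ite B g u => 1 + B.size + g.size + (1 + B.size) + u.size
  | .pch _ g u => 1 + g.size + u.size
  | .mul g u => 1 + g.size + u.size
  | .onem g => 1 + g.size
  | .qmax g u => 1 + g.size + u.size
  | .qmin g u => 1 + g.size + u.size
  | .sup _ g => 1 + g.size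
  | .inf _ g => 1 + g.size
  | .sep g u => 1 + g.size + u.size
  | .wand φ g => 1 + g.size + φ.size

/-- Probabilistic size `π(f)` of a `QSL` formula. -/
def QSL.psize {k : ℕ} : QSL k → ℕ
  | .iver _ => 0
  | .ite _ g u => g.psize + u.psize
  | .pch _ g u => 1 + g.psize + u.psize
  | .mul g u => 1 + g.psize + u.psize
  | .onem g => g.psize
  | .qmax g u => g.psize + u.psize
  | .qmin g u => g.psize + u.psize
  | .sup _ g => g.psize
  | .inf _ g => g.psize
  | .sep g u => 1 + g.psize + u.psize
  | .wand _ g => g.psize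

/-- The evaluation set `Eval(f)` as a finite set of rationals. -/
def QSL.evalF {k : ℕ} : QSL k → Finset ℚ
  | .iver _ => {0, 1}
  | .ite _ g u => g.evalF ∪ u.evalF
  | .pch q g u => Finset.image₂ (fun β γ => q * β + (1 - q) * γ) g.evalF u.evalF
  | .mul g u => Finset.image₂ (fun β γ => β * γ) g.evalF u.evalF
  | .onem g => g.evalF.image (fun β => 1 - β)
  | .qmax g u => g.evalF ∪ u.evalF
  | .qmin g u => g.evalF ∪ u.evalF
  | .sup _ g => g.evalF
  | .inf _ g => g.evalF
  | .sep g u => Finset.image₂ (fun β γ => β * γ) g.evalF u.evalF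
  | .wand _ g => g.evalF

/-- A nonempty disjunction `φ ∨ ψ₁ ∨ … ∨ ψₙ`. -/
def SL.orChain {k : ℕ} : SL k → List (SL k) → SL k
  | φ, [] => φ
  | φ, ψ :: l => .or φ (SL.orChain ψ l)

/-- Disjunction of a list of formulae (`false`, i.e. `¬true`, for the empty list;
in all uses below the list is provably nonempty). -/
def SL.orList {k : ℕ} : List (SL k) → SL k
  | [] => .not .tt
  | φ :: l => SL.orChain φ l

/-- The construction `⌈f⌉_α` of an `SL(𝔄)` formula characterizing `α ≤ ⟦f⟧`. -/
noncomputable def QSL.atLeast {k : ℕ} : QSL k → ℚ → SL k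
  | .iver φ, α => if α ≤ 0 then .tt else φ
  | .ite B g u, α => .or (.and B (g.atLeast α)) (.and (.not B) (u.atLeast α))
  | .pch q g u, α =>
      SL.orList ((((g.evalF ×ˢ u.evalF).filter
          (fun p => α ≤ q * p.1 + (1 - q) * p.2)).toList).map
        (fun p => .and (g.atLeast p.1) (u.atLeast p.2)))
  | .mul g u, α =>
      SL.orList ((((g.evalF ×ˢ u.evalF).filter (fun p => α ≤ p.1 * p.2)).toList).map
        (fun p => .and (g.atLeast p.1) (u.atLeast p.2)))
  | .onem g, α =>
      if α ≤ 0 then .tt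
      else .not (g.atLeast (((g.evalF.filter (fun β => 1 - α < β)).min).untopD 1))
  | .qmax g u, α => .or (g.atLeast α) (u.atLeast α)
  | .qmin g u, α => .and (g.atLeast α) (u.atLeast α)
  | .sup x g, α => .ex x (g.atLeast α)
  | .inf x g, α => .all x (g.atLeast α)
  | .sep g u, α =>
      SL.orList ((((g.evalF ×ˢ u.evalF).filter (fun p => α ≤ p.1 * p.2)).toList).map
        (fun p => .sep (g.atLeast p.1) (u.atLeast p.2)))
  | .wand φ g, α => .wand φ (g.atLeast α)

end QSLPaper

namespace QSLPaper


lemma two_pow_add' (a b : ℕ) : 2^a + 2^b ≤ 2^(a+b) + 1 := by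
  have ha : 1 ≤ 2^a := Nat.one_le_two_pow
  have hb : 1 ≤ 2^b := Nat.one_le_two_pow
  rw [pow_add]
  nlinarith

lemma img2_aux (f : ℝ → ℝ → ℝ) (s t : Set ℝ) (hs : s.Finite) (ht : t.Finite) :
    {r : ℝ | ∃ β ∈ s, ∃ γ ∈ t, r = f β γ}.Finite ∧
    {r : ℝ | ∃ β ∈ s, ∃ γ ∈ t, r = f β γ}.ncard ≤ s.ncard * t.ncard := by
  have he : {r : ℝ | ∃ β ∈ s, ∃ γ ∈ t, r = f β γ} = Set.image2 f s t := by
    ext r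
    simp only [Set.mem_setOf_eq, Set.mem_image2]
    constructor
    · rintro ⟨β, hβ, γ, hγ, rfl⟩; exact ⟨β, hβ, γ, hγ, rfl⟩
    · rintro ⟨β, hβ, γ, hγ, rfl⟩; exact ⟨β, hβ, γ, hγ, rfl⟩
  rw [he, ← Set.image_prod]
  have hprod : (s ×ˢ t).Finite := hs.prod ht
  refine ⟨hprod.image _, ?_⟩
  calc ((fun p : ℝ × ℝ => f p.1 p.2) '' (s ×ˢ t)).ncard ≤ (s ×ˢ t).ncard :=
        Set.ncard_image_le hprod
    _ = s.ncard * t.ncard := by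
        rw [← Nat.card_coe_set_eq, ← Nat.card_coe_set_eq,
          ← Nat.card_coe_set_eq, Nat.card_congr (Equiv.Set.prod s t),
          Nat.card_prod]

lemma union_aux (A B : Set ℝ) (a b : ℕ)
    (hA : A.Finite ∧ (0:ℝ) ∈ A ∧ (1:ℝ) ∈ A ∧ A.ncard ≤ 2^(a+1))
    (hB : B.Finite ∧ (0:ℝ) ∈ B ∧ (1:ℝ) ∈ B ∧ B.ncard ≤ 2^(b+1)) :
    (A ∪ B).Finite ∧ (0:ℝ) ∈ A ∪ B ∧ (1:ℝ) ∈ A ∪ B ∧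
      (A ∪ B).ncard ≤ 2^(a+b+1) := by
  obtain ⟨hAf, h0A, h1A, hcA⟩ := hA
  obtain ⟨hBf, h0B, h1B, hcB⟩ := hB
  have hsum := Set.ncard_union_add_ncard_inter A B hAf hBf
  have h2 : 2 ≤ (A ∩ B).ncard := by
    have hsub : ({0, 1} : Set ℝ) ⊆ A ∩ B := by
      intro x hx
      rcases hx with rfl | hx
      · exact ⟨h0A, h0B⟩
      · rcases hx with rfl
        exact ⟨h1A, h1B⟩
    calc 2 = ({0, 1} : Set ℝ).ncard := (Set.ncard_pair (by norm_num)).symm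
      _ ≤ (A ∩ B).ncard := Set.ncard_le_ncard hsub (hAf.inter_of_left B)
  have hp := two_pow_add' a b
  have e1 : 2^(a+1) = 2 * 2^a := by rw [pow_succ]; ring
  have e2 : 2^(b+1) = 2 * 2^b := by rw [pow_succ]; ring
  have e3 : 2^(a+b+1) = 2 * 2^(a+b) := by rw [pow_succ]; ring
  exact ⟨hAf.union hBf, Or.inl h0A, Or.inl h1A, by omega⟩

lemma mul_aux (f : ℝ → ℝ → ℝ) (A B : Set ℝ) (a b : ℕ)
    (hf0 : f 0 0 = 0) (hf1 : f 1 1 = 1)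
    (hA : A.Finite ∧ (0:ℝ) ∈ A ∧ (1:ℝ) ∈ A ∧ A.ncard ≤ 2^(a+1))
    (hB : B.Finite ∧ (0:ℝ) ∈ B ∧ (1:ℝ) ∈ B ∧ B.ncard ≤ 2^(b+1)) :
    {r : ℝ | ∃ β ∈ A, ∃ γ ∈ B, r = f β γ}.Finite ∧
    (0:ℝ) ∈ {r : ℝ | ∃ β ∈ A, ∃ γ ∈ B, r = f β γ} ∧
    (1:ℝ) ∈ {r : ℝ | ∃ β ∈ A, ∃ γ ∈ B, r = f β γ} ∧
    {r : ℝ | ∃ β ∈ A, ∃ γ ∈ B, r = f β γ}.ncard ≤ 2^(1 + a + b + 1) := by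
  obtain ⟨hAf, h0A, h1A, hcA⟩ := hA
  obtain ⟨hBf, h0B, h1B, hcB⟩ := hB
  obtain ⟨hfin, hcard⟩ := img2_aux f A B hAf hBf
  refine ⟨hfin, ⟨0, h0A, 0, h0B, hf0.symm⟩, ⟨1, h1A, 1, h1B, hf1.symm⟩, ?_⟩
  calc {r : ℝ | ∃ β ∈ A, ∃ γ ∈ B, r = f β γ}.ncard ≤ A.ncard * B.ncard := hcard
    _ ≤ 2^(a+1) * 2^(b+1) := Nat.mul_le_mul hcA hcB
    _ = 2^(1 + a + b + 1) := by rw [← pow_add]; ring_nf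

lemma evalSet_key {k : ℕ} (f : QSL k) :
    f.evalSet.Finite ∧ (0:ℝ) ∈ f.evalSet ∧ (1:ℝ) ∈ f.evalSet ∧
      f.evalSet.ncard ≤ 2 ^ (f.psize + 1) := by
  induction f with
  | iver φ =>
      refine ⟨(Set.finite_singleton (1:ℝ)).insert 0, Or.inl rfl, Or.inr rfl, ?_⟩
      show ({0, 1} : Set ℝ).ncard ≤ 2 ^ (0 + 1)
      rw [Set.ncard_pair (by norm_num : (0:ℝ) ≠ 1)]
      norm_num
  | ite B g u ihg ihu =>
      simpa only [QSL.evalSet, QSL.psize] using union_aux _ _ _ _ ihg ihu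
  | qmax g u ihg ihu =>
      simpa only [QSL.evalSet, QSL.psize] using union_aux _ _ _ _ ihg ihu
  | qmin g u ihg ihu =>
      simpa only [QSL.evalSet, QSL.psize] using union_aux _ _ _ _ ihg ihu
  | pch q g u ihg ihu =>
      simpa only [QSL.evalSet, QSL.psize] using
        mul_aux (fun β γ => (q:ℝ) * β + (1 - (q:ℝ)) * γ) _ _ _ _
          (by ring) (by ring) ihg ihu
  | mul g u ihg ihu =>
      simpa only [QSL.evalSet, QSL.psize] using
        mul_aux (fun β γ => β * γ) _ _ _ _ (by ring) (by ring) ihg ihu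
  | sep g u ihg ihu =>
      simpa only [QSL.evalSet, QSL.psize] using
        mul_aux (fun β γ => β * γ) _ _ _ _ (by ring) (by ring) ihg ihu
  | onem g ihg =>
      obtain ⟨hf, h0, h1, hc⟩ := ihg
      have he : (QSL.onem g).evalSet = (fun β : ℝ => 1 - β) '' g.evalSet := by
        ext r
        simp only [QSL.evalSet, Set.mem_setOf_eq, Set.mem_image]
        constructor
        · rintro ⟨β, hβ, rfl⟩; exact ⟨β, hβ, rfl⟩
        · rintro ⟨β, hβ, rfl⟩; exact ⟨β, hβ, rfl⟩
      rw [he]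
      refine ⟨hf.image _, ⟨1, h1, by norm_num⟩, ⟨0, h0, by norm_num⟩, ?_⟩
      calc ((fun β : ℝ => 1 - β) '' g.evalSet).ncard ≤ g.evalSet.ncard :=
            Set.ncard_image_le hf
        _ ≤ 2 ^ (g.psize + 1) := hc
        _ = 2 ^ ((QSL.onem g).psize + 1) := rfl
  | sup x g ihg => exact ihg
  | inf x g ihg => exact ihg
  | wand φ g ihg => exact ihg

/-- For every `QSL(𝔄)` formula `f`, the cardinality of the
evaluation set `Eval(f)` is at most `2^(π(f)+1)`, where `π(f)` is the
probabilistic size of `f`. -/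
theorem evalSet_card_le {k : ℕ} (hk : 1 ≤ k)
    (𝔄 : Set (Set (HState k))) (f : QSL k)
    (hWF : f.WF) (hA : f.atomsIn 𝔄) :
    f.evalSet.Finite ∧ f.evalSet.ncard ≤ 2 ^ (f.psize + 1) := by
  obtain ⟨h1, _, _, h4⟩ := evalSet_key f
  exact ⟨h1, h4⟩

end QSLPaper
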